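/- Let F_m be the free group on {ê₁,…,ê_m}, let E₀ = {[ê_i^{ε₁}, ê_j^{ε₂}] : i,j ∈ [m], ε₁,ε₂ ∈ {±1}} be the set of commutators of generators and their inverses, and let X be an F_m-set. Write X_{E₀} = {x ∈ X : w·x = x for all w ∈ E₀}. A word is called sorted if it is of the form ê₁^{a₁}⋯ê_m^{a_m}, and for w ∈ F_m let ŵ denote its sorted form (the unique sorted word with the same image in ℤ^m). Suppose x ∈ X and R ∈ ℕ are such that ŵ·x ∈ X_{E₀} for every sorted word ŵ with all exponents bounded by R in absolute value. Then for every w ∈ F_m of word-length at most R, w·x = ŵ·x. -/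

import Mathlib

/-- The sorted word `ê₁^{a₁} ⋯ ê_m^{a_m}` in the free group on `Fin m`. -/
def sortedWord {m : ℕ} (a : Fin m → ℤ) : FreeGroup (Fin m) :=
  ((List.finRange m).map fun i => FreeGroup.of i ^ a i).prod

/-- The exponent vector of a word `w ∈ F_m`, i.e. its image in `ℤ^m`. -/
def expVec {m : ℕ} (w : FreeGroup (Fin m)) : Fin m → ℤ :=
  Multiplicative.toAdd
    ((FreeGroup.lift fun i => Multiplicative.ofAdd (Pi.single i (1 : ℤ))) w)

open scoped commutatorElement

namespace Stmt11

variable {m : ℕ}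

/-- exponent of a letter -/
def sg (b : Bool) : ℤ := if b then 1 else -1

lemma sg_cases (b : Bool) : sg b = 1 ∨ sg b = -1 := by cases b <;> simp [sg]

/-- product of a list of letters -/
def prodL (l : List (Fin m × Bool)) : FreeGroup (Fin m) :=
  (l.map fun p => FreeGroup.of p.1 ^ sg p.2).prod

/-- exponent vector of a list of letters -/
def vec : List (Fin m × Bool) → Fin m → ℤ
  | [] => 0
  | p :: t => sg p.2 • Pi.single p.1 (1 : ℤ) + vec t

lemma prodL_cons (p : Fin m × Bool) (t : List (Fin m × Bool)) :
    prodL (p :: t) = FreeGroup.of p.1 ^ sg p.2 * prodL t := by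
  simp [prodL]

lemma abs_vec (l : List (Fin m × Bool)) (j : Fin m) : |vec l j| ≤ l.length := by
  induction l with
  | nil => simp [vec]
  | cons p t ih =>
    have key : vec (p :: t) j
        = sg p.2 * ((Pi.single p.1 (1:ℤ) : Fin m → ℤ) j) + vec t j := by
      simp [vec, Pi.smul_apply, smul_eq_mul]
    rw [key]
    have h1 : |sg p.2 * ((Pi.single p.1 (1:ℤ) : Fin m → ℤ) j)| ≤ 1 := by
      rcases sg_cases p.2 with h | h <;> rw [h] <;> by_cases hj : j = p.1 <;>
        simp [Pi.single_apply, hj]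
    have h2 := abs_add_le (sg p.2 * ((Pi.single p.1 (1:ℤ) : Fin m → ℤ) j)) (vec t j)
    rw [List.length_cons]; push_cast; linarith

/-- tail products of sorted words -/
def tailProd (a : Fin m → ℤ) (k : ℕ) : FreeGroup (Fin m) :=
  (((List.finRange m).drop k).map fun j => FreeGroup.of j ^ a j).prod

lemma tailProd_zero (a : Fin m → ℤ) : tailProd a 0 = sortedWord a := rfl

lemma tailProd_of_ge (a : Fin m → ℤ) {k : ℕ} (h : m ≤ k) : tailProd a k = 1 := by
  unfold tailProd
  rw [List.drop_eq_nil_of_le (by simpa using h)]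
  simp

lemma tailProd_peel (a : Fin m → ℤ) {k : ℕ} (h : k < m) :
    tailProd a k = FreeGroup.of ⟨k, h⟩ ^ a ⟨k, h⟩ * tailProd a (k + 1) := by
  unfold tailProd
  rw [List.drop_eq_getElem_cons (l := List.finRange m) (by simpa using h)]
  simp [List.getElem_finRange, Fin.cast]

lemma tailProd_congr_aux (d : ℕ) : ∀ (k : ℕ) (a b : Fin m → ℤ), m ≤ k + d →
    (∀ j : Fin m, k ≤ (j : ℕ) → a j = b j) → tailProd a k = tailProd b k := by
  induction d with
  | zero => intro k a b hk h; rw [tailProd_of_ge a (by omega), tailProd_of_ge b (by omega)]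
  | succ d ih =>
    intro k a b hk h
    by_cases hkm : k < m
    · rw [tailProd_peel a hkm, tailProd_peel b hkm, h ⟨k, hkm⟩ le_rfl,
        ih (k+1) a b (by omega) (fun j hj => h j (by omega))]
    · rw [tailProd_of_ge a (by omega), tailProd_of_ge b (by omega)]

lemma tailProd_congr {a b : Fin m → ℤ} {k : ℕ} (h : ∀ j : Fin m, k ≤ (j : ℕ) → a j = b j) :
    tailProd a k = tailProd b k :=
  tailProd_congr_aux m k a b (by omega) h

lemma sortedWord_eq_tailProd {a : Fin m → ℤ} {k : ℕ} (h : ∀ j : Fin m, (j : ℕ) < k → a j = 0) :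
    sortedWord a = tailProd a k := by
  induction k with
  | zero => rfl
  | succ k ih =>
    rw [ih (fun j hj => h j (Nat.lt_succ_of_lt hj))]
    by_cases hk : k < m
    · rw [tailProd_peel a hk, h ⟨k, hk⟩ (Nat.lt_succ_self k)]
      simp
    · rw [tailProd_of_ge a (le_of_not_gt hk),
        tailProd_of_ge a (le_of_not_gt (fun h' => hk (Nat.lt_of_succ_lt h')))]

lemma sortedWord_zero : sortedWord (0 : Fin m → ℤ) = 1 := by
  simp [sortedWord]

variable {X : Type} [MulAction (FreeGroup (Fin m)) X]

lemma swap_of_fix {g h : FreeGroup (Fin m)} {u : X}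
    (hfix : ⁅g, h⁆ • (h • g • u) = h • g • u) : g • h • u = h • g • u := by
  have e1 : ⁅g, h⁆ • (h • g • u) = g • h • u := by
    rw [commutatorElement_def]; simp [mul_smul]
  rw [e1] at hfix; exact hfix

section Move

variable {x : X} {R : ℕ}

/-- One swap: commute `of i ^ e` past `of j ^ δ` at a point `v`, provided
`of j ^ δ • of i ^ e • v` is a box point. -/
lemma one_swap
    (hbox : ∀ a : Fin m → ℤ, (∀ i, |a i| ≤ (R : ℤ)) →
      ∀ i j : Fin m, ∀ ε₁ ε₂ : ℤ, (ε₁ = 1 ∨ ε₁ = -1) → (ε₂ = 1 ∨ ε₂ = -1) →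
        ⁅FreeGroup.of i ^ ε₁, FreeGroup.of j ^ ε₂⁆ • (sortedWord a • x)
          = sortedWord a • x)
    {i j : Fin m} {e δ : ℤ} (he : e = 1 ∨ e = -1) (hδ : δ = 1 ∨ δ = -1)
    {v : X} {b : Fin m → ℤ} (hb : ∀ l, |b l| ≤ (R : ℤ))
    (hpt : FreeGroup.of j ^ δ • FreeGroup.of i ^ e • v = sortedWord b • x) :
    FreeGroup.of i ^ e • FreeGroup.of j ^ δ • v
      = FreeGroup.of j ^ δ • FreeGroup.of i ^ e • v := by
  apply swap_of_fix
  rw [hpt]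
  exact hbox b hb i j e δ he hδ

/-- The key move lemma, by downward induction on `k` from `i` to `0`. -/
lemma move_aux
    (hbox : ∀ a : Fin m → ℤ, (∀ i, |a i| ≤ (R : ℤ)) →
      ∀ i j : Fin m, ∀ ε₁ ε₂ : ℤ, (ε₁ = 1 ∨ ε₁ = -1) → (ε₂ = 1 ∨ ε₂ = -1) →
        ⁅FreeGroup.of i ^ ε₁, FreeGroup.of j ^ ε₂⁆ • (sortedWord a • x)
          = sortedWord a • x)
    (i : Fin m) (e : ℤ) (he : e = 1 ∨ e = -1)
    (a : Fin m → ℤ) (ha : ∀ l, |a l| ≤ (R : ℤ)) (hai : |a i + e| ≤ (R : ℤ)) :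
    ∀ d k, k + d = (i : ℕ) →
      FreeGroup.of i ^ e • tailProd a k • x
        = tailProd (a + e • Pi.single i 1) k • x := by
  set a' : Fin m → ℤ := a + e • Pi.single i 1 with ha'
  have ha'i : a' i = a i + e := by simp [ha', Pi.single_apply]
  have ha'ne : ∀ l : Fin m, l ≠ i → a' l = a l := by
    intro l hl; simp [ha', Pi.single_apply, hl]
  have ha'bdd : ∀ l, |a' l| ≤ (R : ℤ) := by
    intro l
    by_cases hl : l = i
    · rw [hl, ha'i]; exact hai
    · rw [ha'ne l hl]; exact ha l
  intro d
  induction d with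
  | zero =>
    intro k hk
    have hki : k = (i : ℕ) := by omega
    have hkm : k < m := by have := i.isLt; omega
    have hik : (⟨k, hkm⟩ : Fin m) = i := Fin.ext hki
    have ht : tailProd a' (k+1) = tailProd a (k+1) :=
      tailProd_congr (fun l hl => ha'ne l (by
        intro hli; apply_fun Fin.val at hli; omega))
    rw [tailProd_peel a hkm, tailProd_peel a' hkm, hik, ha'i, ht,
      mul_smul, mul_smul, smul_smul, ← zpow_add, add_comm]
  | succ d ih =>
    intro k hk
    have hkm : k < m := by have := i.isLt; omega
    set j : Fin m := ⟨k, hkm⟩ with hj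
    have hjk : (j : ℕ) = k := rfl
    have hji : j ≠ i := by
      intro h; apply_fun Fin.val at h; rw [hjk] at h; omega
    -- single swap step for the inner induction
    have step : ∀ c δ : ℤ, (δ = 1 ∨ δ = -1) → |c| ≤ (R:ℤ) → |c + δ| ≤ (R:ℤ) →
        (FreeGroup.of i ^ e • FreeGroup.of j ^ c • tailProd a (k+1) • x
          = FreeGroup.of j ^ c • FreeGroup.of i ^ e • tailProd a (k+1) • x) →
        FreeGroup.of i ^ e • FreeGroup.of j ^ (c + δ) • tailProd a (k+1) • x
          = FreeGroup.of j ^ (c + δ) • FreeGroup.of i ^ e • tailProd a (k+1) • x := by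
      intro c δ hδ hc hcδ hcomm
      set b : Fin m → ℤ :=
        (fun l : Fin m => if k + 1 ≤ (l : ℕ) then a' l else 0) + (c + δ) • Pi.single j 1 with hb
      have hbj : b j = c + δ := by
        simp [hb, Pi.single_apply, hjk]
      have hbne : ∀ l : Fin m, l ≠ j → b l = if k + 1 ≤ (l : ℕ) then a' l else 0 := by
        intro l hl; simp [hb, Pi.single_apply, hl]
      have hbbdd : ∀ l, |b l| ≤ (R : ℤ) := by
        intro l
        by_cases hl : l = j
        · rw [hl, hbj]; exact hcδ
        · rw [hbne l hl]; split
          · exact ha'bdd l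
          · simp
      have hsb : sortedWord b = FreeGroup.of j ^ (c + δ) * tailProd a' (k + 1) := by
        rw [sortedWord_eq_tailProd (k := k) (a := b)
          (fun l hl => by
            rw [hbne l (by intro h; apply_fun Fin.val at h; rw [hjk] at h; omega)]
            rw [if_neg (by omega)]),
          tailProd_peel b hkm, ← hj, hbj]
        congr 1
        exact tailProd_congr (fun l hl => by
          rw [hbne l (by intro h; apply_fun Fin.val at h; rw [hjk] at h; omega),
            if_pos hl])
      have hpt : FreeGroup.of j ^ δ • FreeGroup.of i ^ e •
            (FreeGroup.of j ^ c • tailProd a (k+1) • x) = sortedWord b • x := by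
        rw [hcomm, ih (k+1) (by omega), hsb, mul_smul,
          smul_smul (FreeGroup.of j ^ δ), ← zpow_add, add_comm]
      have hswap := one_swap hbox he hδ hbbdd hpt
      calc FreeGroup.of i ^ e • FreeGroup.of j ^ (c + δ) • tailProd a (k+1) • x
          = FreeGroup.of i ^ e • FreeGroup.of j ^ δ •
              FreeGroup.of j ^ c • tailProd a (k+1) • x := by
            rw [smul_smul (FreeGroup.of j ^ δ), ← zpow_add, add_comm]
        _ = FreeGroup.of j ^ δ • FreeGroup.of i ^ e •
              FreeGroup.of j ^ c • tailProd a (k+1) • x := hswap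
        _ = FreeGroup.of j ^ δ • FreeGroup.of j ^ c •
              FreeGroup.of i ^ e • tailProd a (k+1) • x := by rw [hcomm]
        _ = FreeGroup.of j ^ (c + δ) • FreeGroup.of i ^ e • tailProd a (k+1) • x := by
            rw [smul_smul, ← zpow_add, add_comm]
    -- inner induction: commuting of i^e with of j^c
    have comm : ∀ c : ℤ, |c| ≤ (R : ℤ) →
        FreeGroup.of i ^ e • FreeGroup.of j ^ c • tailProd a (k+1) • x
          = FreeGroup.of j ^ c • FreeGroup.of i ^ e • tailProd a (k+1) • x := by
      intro c
      induction c using Int.induction_on with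
      | zero => intro _; simp
      | succ n ihn =>
        intro hc
        have hn : |(n : ℤ)| ≤ (R : ℤ) := by
          rw [abs_le] at hc ⊢; omega
        exact step n 1 (Or.inl rfl) hn hc (ihn hn)
      | pred n ihn =>
        intro hc
        have hn : |(-n : ℤ)| ≤ (R : ℤ) := by
          rw [abs_le] at hc ⊢; omega
        have h2 : (-(n:ℤ) + (-1)) = -(n:ℤ) - 1 := by ring
        rw [← h2]
        exact step (-(n:ℤ)) (-1) (Or.inr rfl) hn (by rw [h2]; exact hc) (ihn hn)
    -- conclude the step of the downward induction
    have ht : tailProd a' k • x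
        = FreeGroup.of j ^ (a j) • FreeGroup.of i ^ e • tailProd a (k+1) • x := by
      rw [tailProd_peel a' hkm, ← hj, ha'ne j hji, mul_smul, ih (k+1) (by omega)]
    rw [tailProd_peel a hkm, ← hj, mul_smul, ht]
    exact comm (a j) (ha j)

/-- moving a single generator over a sorted word -/
lemma move
    (hbox : ∀ a : Fin m → ℤ, (∀ i, |a i| ≤ (R : ℤ)) →
      ∀ i j : Fin m, ∀ ε₁ ε₂ : ℤ, (ε₁ = 1 ∨ ε₁ = -1) → (ε₂ = 1 ∨ ε₂ = -1) →
        ⁅FreeGroup.of i ^ ε₁, FreeGroup.of j ^ ε₂⁆ • (sortedWord a • x)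
          = sortedWord a • x)
    (i : Fin m) (e : ℤ) (he : e = 1 ∨ e = -1)
    (a : Fin m → ℤ) (ha : ∀ l, |a l| ≤ (R : ℤ)) (hai : |a i + e| ≤ (R : ℤ)) :
    FreeGroup.of i ^ e • sortedWord a • x
      = sortedWord (a + e • Pi.single i 1) • x := by
  rw [← tailProd_zero, ← tailProd_zero]
  exact move_aux hbox i e he a ha hai (i : ℕ) 0 (by omega)

/-- the main induction on the word -/
lemma main
    (hbox : ∀ a : Fin m → ℤ, (∀ i, |a i| ≤ (R : ℤ)) →
      ∀ i j : Fin m, ∀ ε₁ ε₂ : ℤ, (ε₁ = 1 ∨ ε₁ = -1) → (ε₂ = 1 ∨ ε₂ = -1) →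
        ⁅FreeGroup.of i ^ ε₁, FreeGroup.of j ^ ε₂⁆ • (sortedWord a • x)
          = sortedWord a • x) :
    ∀ l : List (Fin m × Bool), l.length ≤ R →
      prodL l • x = sortedWord (vec l) • x := by
  intro l
  induction l with
  | nil =>
    intro _
    show (1 : FreeGroup (Fin m)) • x = sortedWord (0 : Fin m → ℤ) • x
    rw [sortedWord_zero]
  | cons p t ih =>
    intro hlen
    have hlt : t.length ≤ R := le_trans (Nat.le_succ _) hlen
    have hbd : ∀ l, |vec t l| ≤ (R : ℤ) := fun l =>
      le_trans (abs_vec t l) (by exact_mod_cast hlt)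
    have hbd2 : |vec t p.1 + sg p.2| ≤ (R : ℤ) := by
      have h1 := abs_vec t p.1
      have h2 := abs_add_le (vec t p.1) (sg p.2)
      have h3 : |sg p.2| ≤ 1 := by rcases sg_cases p.2 with h | h <;> simp [h]
      have h4 : (t.length : ℤ) + 1 ≤ (R : ℤ) := by
        rw [List.length_cons] at hlen; exact_mod_cast hlen
      linarith
    have hv : vec (p :: t) = vec t + sg p.2 • Pi.single p.1 (1:ℤ) := by
      show sg p.2 • Pi.single p.1 (1:ℤ) + vec t = _
      rw [add_comm]
    rw [prodL_cons, mul_smul, ih hlt, hv]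
    exact move hbox p.1 (sg p.2) (sg_cases p.2) (vec t) hbd hbd2

end Move

lemma of_zpow_sg (i : Fin m) (b : Bool) :
    FreeGroup.of i ^ sg b = FreeGroup.mk [(i, b)] := by
  cases b
  · show FreeGroup.of i ^ (-1 : ℤ) = _
    rw [zpow_neg_one]
    show (FreeGroup.mk [(i, true)])⁻¹ = _
    rw [FreeGroup.inv_mk]
    rfl
  · show FreeGroup.of i ^ (1 : ℤ) = _
    rw [zpow_one]
    rfl

lemma mk_eq_prodL (l : List (Fin m × Bool)) : FreeGroup.mk l = prodL l := by
  induction l with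
  | nil =>
    show _ = (1 : FreeGroup (Fin m))
    rw [← FreeGroup.one_eq_mk]
  | cons p t ih =>
    rw [show p :: t = [p] ++ t from rfl, ← FreeGroup.mul_mk, ih, ← of_zpow_sg,
      ← prodL_cons]
    rfl

lemma expVec_mul (u v : FreeGroup (Fin m)) : expVec (u * v) = expVec u + expVec v := by
  simp [expVec]

lemma expVec_of_zpow (i : Fin m) (e : ℤ) :
    expVec (FreeGroup.of i ^ e) = e • Pi.single i 1 := by
  simp [expVec, map_zpow, toAdd_zpow]

lemma expVec_prodL (l : List (Fin m × Bool)) : expVec (prodL l) = vec l := by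
  induction l with
  | nil => simp [prodL, expVec, vec]
  | cons p t ih =>
    rw [prodL_cons, expVec_mul, expVec_of_zpow, ih]
    rfl

end Stmt11

theorem stmt11 {m : ℕ} {X : Type} [MulAction (FreeGroup (Fin m)) X]
    (x : X) (R : ℕ)
    (hbox : ∀ a : Fin m → ℤ, (∀ i, |a i| ≤ (R : ℤ)) →
      ∀ i j : Fin m, ∀ ε₁ ε₂ : ℤ, (ε₁ = 1 ∨ ε₁ = -1) → (ε₂ = 1 ∨ ε₂ = -1) →
        ⁅FreeGroup.of i ^ ε₁, FreeGroup.of j ^ ε₂⁆ • (sortedWord a • x)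
          = sortedWord a • x) :
    ∀ w : FreeGroup (Fin m), (FreeGroup.toWord w).length ≤ R →
      w • x = sortedWord (expVec w) • x := by
  intro w hw
  have h1 : w = Stmt11.prodL w.toWord := by
    rw [← Stmt11.mk_eq_prodL, FreeGroup.mk_toWord]
  rw [h1, Stmt11.expVec_prodL]
  exact Stmt11.main hbox _ hw
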